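/- arXiv:2002.01957 — 2 statements merged into one kernel-verified Lean document; each statement's English description precedes it below -/
import Mathlib

section
/- For any two finite simple graphs G and H, the lexicographic product G[H] is k-indicated colorable for every integer k ≥ col(G)·col(H). -/
open SimpleGraph
open scoped Classical

/-- The lexicographic product `G[H]`. -/
def lexProd {α β : Type*} (G : SimpleGraph α) (H : SimpleGraph β) :
    SimpleGraph (α × β) where
  Adj x y := G.Adj x.1 y.1 ∨ (x.1 = y.1 ∧ H.Adj x.2 y.2)
  symm := by
    constructor
    rintro x y (h | ⟨h1, h2⟩)
    · exact Or.inl h.symm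
    · exact Or.inr ⟨h1.symm, h2.symm⟩
  loopless := by
    constructor
    rintro x (h | ⟨-, h2⟩)
    · exact G.loopless.irrefl _ h
    · exact H.loopless.irrefl _ h2

/-- `AnnWins G k c`: starting from the partial proper coloring `c`, Ann (who presents
uncolored vertices one at a time) has a strategy so that Ben (who properly colors each
presented vertex with one of `k` colors) can always move, and the whole graph gets colored. -/
inductive AnnWins {V : Type*} (G : SimpleGraph V) (k : ℕ) :
    (V → Option (Fin k)) → Prop
  | done (c : V → Option (Fin k)) (h : ∀ v, (c v).isSome) : AnnWins G k c
  | step (c : V → Option (Fin k)) (v : V) (hv : c v = none)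
      (hex : ∃ col : Fin k, ∀ u, G.Adj u v → c u ≠ some col)
      (h : ∀ col : Fin k, (∀ u, G.Adj u v → c u ≠ some col) →
        AnnWins G k (Function.update c v (some col))) : AnnWins G k c

/-- A graph is `k`-indicated colorable if Ann wins the indicated coloring game
with `k` colors starting from the empty coloring. -/
def IndicatedColorable {V : Type*} (G : SimpleGraph V) (k : ℕ) : Prop :=
  AnnWins G k (fun _ => none)

/-- The indicated chromatic number `χᵢ(G)`. -/
noncomputable def indicatedChromaticNumber {V : Type*} (G : SimpleGraph V) : ℕ :=
  sInf {k | IndicatedColorable G k}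

/-- The coloring number `col(G)`: the least `d` such that every nonempty set `S` of
vertices contains a vertex with fewer than `d` neighbours in `S`. -/
noncomputable def coloringNumber {V : Type*} (G : SimpleGraph V) : ℕ :=
  sInf {d : ℕ | ∀ S : Set V, S.Nonempty → ∃ v ∈ S, {u ∈ S | G.Adj v u}.ncard < d}

/-- `F`-freeness: no induced subgraph of `G` is isomorphic to `F`. -/
def IsFreeOf {α β : Type*} (F : SimpleGraph α) (G : SimpleGraph β) : Prop :=
  IsEmpty (F ↪g G)

/-- The complete expansion of `G`, replacing each vertex `v` by a clique on `m v` vertices. -/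
def completeExpansion {V : Type*} (G : SimpleGraph V) (m : V → ℕ) :
    SimpleGraph (Σ v, Fin (m v)) where
  Adj x y := G.Adj x.1 y.1 ∨ (x.1 = y.1 ∧ x ≠ y)
  symm := by
    constructor
    rintro x y (h | ⟨h1, h2⟩)
    · exact Or.inl h.symm
    · exact Or.inr ⟨h1.symm, h2.symm⟩
  loopless := by
    constructor
    rintro x (h | ⟨-, h2⟩)
    · exact G.loopless.irrefl _ h
    · exact h2 rfl

/-- The independent expansion of `G`, replacing each vertex `v` by an independent
set of `m v` vertices. -/
def independentExpansion {V : Type*} (G : SimpleGraph V) (m : V → ℕ) :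
    SimpleGraph (Σ v, Fin (m v)) where
  Adj x y := G.Adj x.1 y.1
  symm := ⟨fun _ _ h => h.symm⟩
  loopless := ⟨fun _ h => G.loopless.irrefl _ h⟩

section AuxProof

open Finset

variable {α β : Type*}

lemma colNum_spec [Fintype α] (G : SimpleGraph α) :
    ∀ S : Set α, S.Nonempty → ∃ v ∈ S, {u ∈ S | G.Adj v u}.ncard < coloringNumber G := by
  have hne : (Fintype.card α + 1) ∈
      {d : ℕ | ∀ S : Set α, S.Nonempty → ∃ v ∈ S, {u ∈ S | G.Adj v u}.ncard < d} := by
    intro S hS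
    obtain ⟨v, hv⟩ := hS
    refine ⟨v, hv, ?_⟩
    have h1 : {u ∈ S | G.Adj v u}.ncard ≤ (Set.univ : Set α).ncard :=
      Set.ncard_le_ncard (Set.subset_univ _) Set.finite_univ
    have h2 : (Set.univ : Set α).ncard = Fintype.card α := by
      simp [Set.ncard_univ, Nat.card_eq_fintype_card]
    omega
  exact Nat.sInf_mem ⟨_, hne⟩

/-- The palette of colors used in the fiber over `x`. -/
noncomputable def pal {k : ℕ} [Fintype β] (c : α × β → Option (Fin k)) (x : α) :
    Finset (Fin k) :=
  Finset.univ.filter (fun γ => ∃ y, c (x, y) = some γ)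

lemma mem_pal {k : ℕ} [Fintype β] {c : α × β → Option (Fin k)} {x : α} {γ : Fin k} :
    γ ∈ pal c x ↔ ∃ y, c (x, y) = some γ := by
  simp [pal]

lemma update_pres {k : ℕ} {c : α × β → Option (Fin k)} {v : α × β} {col : Fin k}
    (hv : c v = none) (u : α × β) (h : (c u).isSome) :
    Function.update c v (some col) u = c u := by
  rcases eq_or_ne u v with rfl | hne
  · rw [hv] at h; simp at h
  · rw [Function.update_of_ne hne]

lemma pal_update_mono {k : ℕ} [Fintype β] {c : α × β → Option (Fin k)} {v : α × β}
    {col : Fin k} (hv : c v = none) (x : α) :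
    pal c x ⊆ pal (Function.update c v (some col)) x := by
  intro γ hγ
  obtain ⟨y, hy⟩ := mem_pal.mp hγ
  exact mem_pal.mpr ⟨y, by rw [update_pres hv (x, y) (by rw [hy]; rfl)]; exact hy⟩

lemma pal_update_ne {k : ℕ} [Fintype β] {c : α × β → Option (Fin k)} {x₀ : α} {ys : β}
    {col : Fin k} {x : α} (hx : x ≠ x₀) :
    pal (Function.update c (x₀, ys) (some col)) x = pal c x := by
  apply Finset.ext
  intro γ
  simp only [mem_pal]
  constructor
  · rintro ⟨y, hy⟩
    rw [Function.update_of_ne (by simp [hx]) ] at hy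
    exact ⟨y, hy⟩
  · rintro ⟨y, hy⟩
    exact ⟨y, by rw [Function.update_of_ne (by simp [hx])]; exact hy⟩

lemma pal_update_self {k : ℕ} [Fintype β] {c : α × β → Option (Fin k)} {x₀ : α} {ys : β}
    {col : Fin k} :
    pal (Function.update c (x₀, ys) (some col)) x₀ ⊆ insert col (pal c x₀) := by
  intro γ hγ
  obtain ⟨y, hy⟩ := mem_pal.mp hγ
  rcases eq_or_ne (x₀, y) (x₀, ys) with heq | hne
  · rw [heq, Function.update_self] at hy
    rw [Finset.mem_insert]
    left
    exact (Option.some_injective _ hy).symm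
  · rw [Function.update_of_ne hne] at hy
    exact Finset.mem_insert_of_mem (mem_pal.mpr ⟨y, hy⟩)

lemma exists_degen [Fintype α] (G : SimpleGraph α) {a : ℕ}
    (hcol : ∀ S : Set α, S.Nonempty → ∃ v ∈ S, {u ∈ S | G.Adj v u}.ncard < a) :
    ∃ idx : α → ℕ, Function.Injective idx ∧
      ∀ v, {u | G.Adj v u ∧ idx u < idx v}.ncard < a := by
  have aux : ∀ n (S : Finset α), S.card = n →
      ∃ idx : α → ℕ, Set.InjOn idx ↑S ∧ (∀ v ∈ S, idx v < n) ∧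
        ∀ v ∈ S, {u | u ∈ S ∧ G.Adj v u ∧ idx u < idx v}.ncard < a := by
    intro n
    induction n with
    | zero =>
      intro S hS
      have hS0 : S = ∅ := Finset.card_eq_zero.mp hS
      subst hS0
      exact ⟨fun _ => 0, by simp, by simp, by simp⟩
    | succ n ih =>
      intro S hS
      have hSne : (↑S : Set α).Nonempty := by
        have : S.Nonempty := Finset.card_pos.mp (by omega)
        exact Finset.coe_nonempty.mpr this
      obtain ⟨v, hvS, hvdeg⟩ := hcol ↑S hSne
      have hvS' : v ∈ S := hvS
      have hcard : (S.erase v).card = n := by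
        rw [Finset.card_erase_of_mem hvS']; omega
      obtain ⟨idx', hinj', hlt', hdeg'⟩ := ih (S.erase v) hcard
      refine ⟨fun u => if u = v then n else idx' u, ?_, ?_, ?_⟩
      · intro u hu w hw huw
        simp only at huw
        by_cases hu' : u = v <;> by_cases hw' : w = v
        · rw [hu', hw']
        · exfalso
          rw [if_pos hu', if_neg hw'] at huw
          have : w ∈ S.erase v := Finset.mem_erase.mpr ⟨hw', hw⟩
          have := hlt' w this
          omega
        · exfalso
          rw [if_neg hu', if_pos hw'] at huw
          have : u ∈ S.erase v := Finset.mem_erase.mpr ⟨hu', hu⟩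
          have := hlt' u this
          omega
        · rw [if_neg hu', if_neg hw'] at huw
          exact hinj' (by exact Finset.mem_coe.mpr (Finset.mem_erase.mpr ⟨hu', hu⟩))
            (Finset.mem_coe.mpr (Finset.mem_erase.mpr ⟨hw', hw⟩)) huw
      · intro u hu
        by_cases hu' : u = v
        · simp [hu']
        · have : u ∈ S.erase v := Finset.mem_erase.mpr ⟨hu', hu⟩
          have := hlt' u this
          simp only [if_neg hu']
          omega
      · intro w hw
        by_cases hw' : w = v
        · subst hw'
          refine lt_of_le_of_lt (Set.ncard_le_ncard ?_ (Set.toFinite _)) hvdeg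
          intro u hu
          exact ⟨hu.1, hu.2.1⟩
        · have hwS' : w ∈ S.erase v := Finset.mem_erase.mpr ⟨hw', hw⟩
          have hkey : {u | u ∈ S ∧ G.Adj w u ∧
              (if u = v then n else idx' u) < (if w = v then n else idx' w)}
              = {u | u ∈ S.erase v ∧ G.Adj w u ∧ idx' u < idx' w} := by
            ext u
            simp only [Set.mem_setOf_eq, if_neg hw', Finset.mem_erase]
            constructor
            · rintro ⟨huS, hadj, hlt⟩
              by_cases hu' : u = v
              · rw [if_pos hu'] at hlt
                have := hlt' w hwS'
                omega
              · rw [if_neg hu'] at hlt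
                exact ⟨⟨hu', huS⟩, hadj, hlt⟩
            · rintro ⟨⟨hu', huS⟩, hadj, hlt⟩
              rw [if_neg hu']
              exact ⟨huS, hadj, hlt⟩
          rw [hkey]
          exact hdeg' w hwS'
  obtain ⟨idx, hinj, _, hdeg⟩ := aux (Finset.univ.card) Finset.univ rfl
  refine ⟨idx, fun u w huw => hinj (by simp) (by simp) huw, fun v => ?_⟩
  have := hdeg v (Finset.mem_univ v)
  convert this using 2
  ext u
  simp


lemma lexProd_adj {G : SimpleGraph α} {H : SimpleGraph β} {u v : α × β} :
    (lexProd G H).Adj u v ↔ (G.Adj u.1 v.1 ∨ (u.1 = v.1 ∧ H.Adj u.2 v.2)) :=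
  Iff.rfl

lemma QF_card_lt {k b : ℕ} [Fintype β] (H : SimpleGraph β)
    {c : α × β → Option (Fin k)} {x₀ : α} {ys : β}
    (idxB : β → ℕ) (hB1 : Function.Injective idxB)
    (hB2 : (Finset.univ.filter (fun z => H.Adj ys z ∧ idxB z < idxB ys)).card < b)
    (hDown : ∀ x y y', idxB y < idxB y' → (c (x, y')).isSome → (c (x, y)).isSome)
    (hnone : c (x₀, ys) = none) :
    (Finset.univ.filter (fun γ : Fin k => ∃ z, H.Adj ys z ∧ c (x₀, z) = some γ)).card < b := by
  refine lt_of_le_of_lt (Finset.card_le_card_of_injOn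
    (fun γ => if h : ∃ z, H.Adj ys z ∧ c (x₀, z) = some γ then h.choose else ys) ?_ ?_) hB2
  · intro γ hγ
    simp only [Finset.mem_coe, Finset.mem_filter, Finset.mem_univ, true_and] at hγ
    simp only [dif_pos hγ, Finset.mem_coe]
    obtain ⟨hadj, hsome⟩ := hγ.choose_spec
    refine Finset.mem_filter.mpr ⟨Finset.mem_univ _, hadj, ?_⟩
    rcases lt_trichotomy (idxB hγ.choose) (idxB ys) with h | h | h
    · exact h
    · exfalso
      have hz := hB1 h
      rw [hz] at hsome
      rw [hsome] at hnone
      exact Option.some_ne_none _ hnone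
    · exfalso
      have := hDown x₀ ys hγ.choose h (by rw [hsome]; rfl)
      rw [hnone] at this
      simp at this
  · intro γ₁ h₁ γ₂ h₂ heq
    simp only [Finset.coe_filter, Finset.mem_univ, true_and, Set.mem_setOf_eq] at h₁ h₂
    simp only [dif_pos h₁, dif_pos h₂] at heq
    have e₁ := h₁.choose_spec.2
    have e₂ := h₂.choose_spec.2
    rw [heq] at e₁
    rw [e₁] at e₂
    exact Option.some_injective _ e₂

lemma isSome_update {k : ℕ} {c : α × β → Option (Fin k)} {v : α × β} {col : Fin k}
    (u : α × β) (h : (c u).isSome) :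
    ((Function.update c v (some col)) u).isSome := by
  rcases eq_or_ne u v with rfl | hne
  · simp
  · rwa [Function.update_of_ne hne]

lemma count_update {k : ℕ} [Fintype α] [Fintype β] {c : α × β → Option (Fin k)}
    {v : α × β} {col : Fin k} (hv : c v = none) :
    (Finset.univ.filter (fun u => Function.update c v (some col) u = none)).card <
      (Finset.univ.filter (fun u => c u = none)).card := by
  apply Finset.card_lt_card
  rw [Finset.ssubset_iff_of_subset]
  · exact ⟨v, by simp [hv], by simp⟩
  · intro u hu
    simp only [Finset.mem_filter, Finset.mem_univ, true_and] at hu ⊢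
    rcases eq_or_ne u v with rfl | hne
    · rw [Function.update_self] at hu
      exact absurd hu (by simp)
    · rwa [Function.update_of_ne hne] at hu

lemma prop1_update {k : ℕ} {G : SimpleGraph α} {H : SimpleGraph β}
    {c : α × β → Option (Fin k)} {x₀ : α} {ys : β} {col : Fin k}
    (hP1 : ∀ x y x' y' (γ : Fin k), G.Adj x x' → c (x, y) = some γ → c (x', y') ≠ some γ)
    (hcol : ∀ u, (lexProd G H).Adj u (x₀, ys) → c u ≠ some col) :
    ∀ x y x' y' (γ : Fin k), G.Adj x x' →
      Function.update c (x₀, ys) (some col) (x, y) = some γ →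
      Function.update c (x₀, ys) (some col) (x', y') ≠ some γ := by
  intro x y x' y' γ hadj h1 h2
  rcases eq_or_ne ((x, y) : α × β) (x₀, ys) with he1 | he1 <;>
    rcases eq_or_ne ((x', y') : α × β) (x₀, ys) with he2 | he2
  · injection he1 with hx _
    injection he2 with hx' _
    subst hx; subst hx'
    exact G.loopless.irrefl _ hadj
  · rw [he1, Function.update_self] at h1
    rw [Function.update_of_ne he2] at h2
    injection he1 with hx _
    subst hx
    have : (lexProd G H).Adj (x', y') (x, ys) := Or.inl hadj.symm
    exact hcol (x', y') this (by rw [h2, ← h1])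
  · rw [he2, Function.update_self] at h2
    rw [Function.update_of_ne he1] at h1
    injection he2 with hx' _
    subst hx'
    have : (lexProd G H).Adj (x, y) (x', ys) := Or.inl hadj
    exact hcol (x, y) this (by rw [h1, ← h2])
  · rw [Function.update_of_ne he1] at h1
    rw [Function.update_of_ne he2] at h2
    exact hP1 x y x' y' γ hadj h1 h2

lemma down_update {k : ℕ} {c : α × β → Option (Fin k)} {x₀ : α} {ys : β} {col : Fin k}
    (idxB : β → ℕ)
    (hDown : ∀ x y y', idxB y < idxB y' → (c (x, y')).isSome → (c (x, y)).isSome)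
    (hnone : c (x₀, ys) = none)
    (hmin : ∀ y, c (x₀, y) = none → idxB ys ≤ idxB y) :
    ∀ x y y', idxB y < idxB y' →
      ((Function.update c (x₀, ys) (some col)) (x, y')).isSome →
      ((Function.update c (x₀, ys) (some col)) (x, y)).isSome := by
  intro x y y' hlt hsome
  rcases eq_or_ne ((x, y) : α × β) (x₀, ys) with he | he
  · rw [he, Function.update_self]
    rfl
  · rw [Function.update_of_ne he]
    rcases eq_or_ne ((x, y') : α × β) (x₀, ys) with he' | he'
    · injection he' with hx hy'
      subst hx; subst hy'
      by_contra hns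
      have hn : c (x, y) = none := Option.not_isSome_iff_eq_none.mp hns
      have := hmin y hn
      omega
    · rw [Function.update_of_ne he'] at hsome
      exact hDown x y y' hlt hsome


lemma update_eq_classical {V δ : Type*} [DecidableEq V] (c : V → δ) (v : V) (a : δ) :
    (@Function.update V (fun _ => δ) (fun a b => Classical.propDecidable (a = b)) c v a) =
      Function.update c v a := by
  funext u
  simp [Function.update_apply]
lemma annWins_aux [Fintype α] [Fintype β] (G : SimpleGraph α) (H : SimpleGraph β)
    {k a b : ℕ} (hk : a * b ≤ k)
    (idxA : α → ℕ) (hA1 : Function.Injective idxA)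
    (hA2 : ∀ v, (Finset.univ.filter (fun u => G.Adj v u ∧ idxA u < idxA v)).card < a)
    (idxB : β → ℕ) (hB1 : Function.Injective idxB)
    (hB2 : ∀ y, (Finset.univ.filter (fun z => H.Adj y z ∧ idxB z < idxB y)).card < b) :
    ∀ (N : ℕ) (c : α × β → Option (Fin k)),
      (Finset.univ.filter (fun v => c v = none)).card ≤ N →
      (∀ x y x' y' (γ : Fin k), G.Adj x x' → c (x, y) = some γ → c (x', y') ≠ some γ) →
      (∀ x y y', idxB y < idxB y' → (c (x, y')).isSome → (c (x, y)).isSome) →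
      ((∀ x, (∀ y, (c (x, y)).isSome) ∨ b ≤ (pal c x).card) ∨
        ((∀ x, (pal c x).card ≤ b) ∧
          ∀ x x', idxA x < idxA x' → (∃ y, (c (x', y)).isSome) →
            ((∀ y, (c (x, y)).isSome) ∨ b ≤ (pal c x).card))) →
      AnnWins (lexProd G H) k c := by
  intro N
  induction N with
  | zero =>
    intro c hcount _ _ _
    refine AnnWins.done c ?_
    intro v
    by_contra hcv
    have hv : v ∈ Finset.univ.filter (fun v => c v = none) := by
      simp [Option.not_isSome_iff_eq_none.mp hcv]
    have := Finset.card_pos.mpr ⟨v, hv⟩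
    omega
  | succ N ih =>
    intro c hcount hP1 hDown hInv
    by_cases hdone : ∀ v, (c v).isSome
    · exact AnnWins.done c hdone
    push_neg at hdone
    obtain ⟨v₀, hv₀⟩ := hdone
    have hv₀n : c v₀ = none := Option.not_isSome_iff_eq_none.mp hv₀
    by_cases hfin : ∀ x, (∀ y, (c (x, y)).isSome) ∨ b ≤ (pal c x).card
    · -- Phase B
      obtain ⟨x₀, y₀⟩ := v₀
      have hU : (Finset.univ.filter (fun y => c (x₀, y) = none)).Nonempty :=
        ⟨y₀, by simp [hv₀n]⟩
      obtain ⟨ys, hysU, hysmin⟩ := Finset.exists_min_image _ idxB hU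
      simp only [Finset.mem_filter, Finset.mem_univ, true_and] at hysU
      have hmin : ∀ y, c (x₀, y) = none → idxB ys ≤ idxB y := fun y hy =>
        hysmin y (by simp [hy])
      have hpump : b ≤ (pal c x₀).card := by
        rcases hfin x₀ with h | h
        · exact absurd (h ys) (by simp [hysU])
        · exact h
      have hQFcard : (Finset.univ.filter
          (fun γ : Fin k => ∃ z, H.Adj ys z ∧ c (x₀, z) = some γ)).card < b :=
        QF_card_lt H idxB hB1 (hB2 ys) hDown hysU
      have hnotsub : ¬ (pal c x₀ ⊆ Finset.univ.filter
          (fun γ : Fin k => ∃ z, H.Adj ys z ∧ c (x₀, z) = some γ)) := by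
        intro hsub
        have := Finset.card_le_card hsub
        omega
      obtain ⟨γ, hγpal, hγQF⟩ := Finset.not_subset.mp hnotsub
      have hlegal : ∀ u, (lexProd G H).Adj u (x₀, ys) → c u ≠ some γ := by
        rintro ⟨x, y⟩ hadj hcy
        rw [lexProd_adj] at hadj
        rcases hadj with h | ⟨hx, hH⟩
        · obtain ⟨y₁, hy₁⟩ := mem_pal.mp hγpal
          exact hP1 x₀ y₁ x y γ h.symm hy₁ hcy
        · simp only at hx hH
          subst hx
          exact hγQF (Finset.mem_filter.mpr ⟨Finset.mem_univ _, y, hH.symm, hcy⟩)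
      refine AnnWins.step c (x₀, ys) hysU ⟨γ, hlegal⟩ ?_
      intro col hcol
      rw [update_eq_classical]
      refine ih (Function.update c (x₀, ys) (some col)) ?_ (prop1_update hP1 hcol)
        (down_update idxB hDown hysU hmin) ?_
      · have := count_update (c := c) (v := ((x₀, ys) : α × β)) (col := col) hysU
        omega
      · left
        intro x
        rcases hfin x with h | h
        · left
          intro y
          exact isSome_update _ (h y)
        · right
          exact le_trans h (Finset.card_le_card (pal_update_mono hysU x))
    · -- Phase A
      have hInvA := hInv.resolve_left hfin
      obtain ⟨hSmall, hOrd⟩ := hInvA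
      push_neg at hfin
      obtain ⟨x₁, hx₁a, hx₁b⟩ := hfin
      have hF : (Finset.univ.filter
          (fun x => (∃ y, c (x, y) = none) ∧ (pal c x).card < b)).Nonempty := by
        refine ⟨x₁, Finset.mem_filter.mpr ⟨Finset.mem_univ _, ?_, by omega⟩⟩
        obtain ⟨y, hy⟩ := hx₁a
        exact ⟨y, Option.not_isSome_iff_eq_none.mp hy⟩
      obtain ⟨x₀, hx₀F, hx₀min⟩ := Finset.exists_min_image _ idxA hF
      obtain ⟨⟨y₀, hy₀⟩, hx₀pal⟩ := (Finset.mem_filter.mp hx₀F).2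
      have hU : (Finset.univ.filter (fun y => c (x₀, y) = none)).Nonempty :=
        ⟨y₀, by simp [hy₀]⟩
      obtain ⟨ys, hysU, hysmin⟩ := Finset.exists_min_image _ idxB hU
      simp only [Finset.mem_filter, Finset.mem_univ, true_and] at hysU
      have hmin : ∀ y, c (x₀, y) = none → idxB ys ≤ idxB y := fun y hy =>
        hysmin y (by simp [hy])
      have hb : 0 < b := Nat.lt_of_le_of_lt (Nat.zero_le _) (hB2 ys)
      have ha : 0 < a := Nat.lt_of_le_of_lt (Nat.zero_le _) (hA2 x₀)
      have hQFcard : (Finset.univ.filter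
          (fun γ : Fin k => ∃ z, H.Adj ys z ∧ c (x₀, z) = some γ)).card < b :=
        QF_card_lt H idxB hB1 (hB2 ys) hDown hysU
      have hsub : (Finset.univ.filter
            (fun γ : Fin k => ∃ u, (lexProd G H).Adj u (x₀, ys) ∧ c u = some γ)) ⊆
          (Finset.univ.filter (fun u => G.Adj x₀ u ∧ idxA u < idxA x₀)).biUnion (pal c) ∪
            (Finset.univ.filter (fun γ : Fin k => ∃ z, H.Adj ys z ∧ c (x₀, z) = some γ)) := by
        intro γ hγ
        simp only [Finset.mem_filter, Finset.mem_univ, true_and] at hγ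
        obtain ⟨⟨x, y⟩, hadj, hcy⟩ := hγ
        rw [lexProd_adj] at hadj
        rcases hadj with h | ⟨hx, hH⟩
        · simp only at h
          refine Finset.mem_union_left _ ?_
          have hxlt : idxA x < idxA x₀ := by
            rcases lt_trichotomy (idxA x) (idxA x₀) with hh | hh | hh
            · exact hh
            · exact absurd (hA1 hh) h.ne
            · exfalso
              have hto : ∃ y', (c (x, y')).isSome := ⟨y, by rw [hcy]; rfl⟩
              rcases hOrd x₀ x hh hto with hd | hp
              · have := hd y₀
                rw [hy₀] at this
                simp at this
              · omega
          exact Finset.mem_biUnion.mpr ⟨x,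
            Finset.mem_filter.mpr ⟨Finset.mem_univ _, h.symm, hxlt⟩,
            mem_pal.mpr ⟨y, hcy⟩⟩
        · simp only at hx hH
          subst hx
          exact Finset.mem_union_right _
            (Finset.mem_filter.mpr ⟨Finset.mem_univ _, y, hH.symm, hcy⟩)
      have hBcard : (Finset.univ.filter
          (fun γ : Fin k => ∃ u, (lexProd G H).Adj u (x₀, ys) ∧ c u = some γ)).card < k := by
        have h1 := Finset.card_le_card hsub
        have h2 := Finset.card_union_le
          ((Finset.univ.filter (fun u => G.Adj x₀ u ∧ idxA u < idxA x₀)).biUnion (pal c))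
          (Finset.univ.filter (fun γ : Fin k => ∃ z, H.Adj ys z ∧ c (x₀, z) = some γ))
        have h3 : ((Finset.univ.filter
            (fun u => G.Adj x₀ u ∧ idxA u < idxA x₀)).biUnion (pal c)).card ≤
            (Finset.univ.filter (fun u => G.Adj x₀ u ∧ idxA u < idxA x₀)).card * b := by
          refine le_trans Finset.card_biUnion_le ?_
          calc ∑ u ∈ Finset.univ.filter (fun u => G.Adj x₀ u ∧ idxA u < idxA x₀), (pal c u).card
              ≤ ∑ _u ∈ Finset.univ.filter (fun u => G.Adj x₀ u ∧ idxA u < idxA x₀), b :=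
                Finset.sum_le_sum (fun u _ => hSmall u)
            _ = _ := by rw [Finset.sum_const, smul_eq_mul]
        have h4 : (Finset.univ.filter (fun u => G.Adj x₀ u ∧ idxA u < idxA x₀)).card * b
            ≤ (a - 1) * b := Nat.mul_le_mul_right _ (by have := hA2 x₀; omega)
        have h5 : (a - 1) * b + b = a * b := by
          have : a - 1 + 1 = a := Nat.succ_pred_eq_of_pos ha
          calc (a - 1) * b + b = (a - 1 + 1) * b := by rw [Nat.succ_mul]
            _ = a * b := by rw [this]
        omega
      have hex : ∃ γ : Fin k, ∀ u, (lexProd G H).Adj u (x₀, ys) → c u ≠ some γ := by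
        have : ∃ γ : Fin k, γ ∉ (Finset.univ.filter
            (fun γ : Fin k => ∃ u, (lexProd G H).Adj u (x₀, ys) ∧ c u = some γ)) := by
          by_contra hno
          push_neg at hno
          have hsub2 : (Finset.univ : Finset (Fin k)) ⊆ _ := fun γ _ => hno γ
          have := Finset.card_le_card hsub2
          rw [Finset.card_univ, Fintype.card_fin] at this
          omega
        obtain ⟨γ, hγ⟩ := this
        exact ⟨γ, fun u hu hcu =>
          hγ (Finset.mem_filter.mpr ⟨Finset.mem_univ _, u, hu, hcu⟩)⟩
      refine AnnWins.step c (x₀, ys) hysU hex ?_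
      intro col hcol
      rw [update_eq_classical]
      refine ih (Function.update c (x₀, ys) (some col)) ?_ (prop1_update hP1 hcol)
        (down_update idxB hDown hysU hmin) ?_
      · have := count_update (c := c) (v := ((x₀, ys) : α × β)) (col := col) hysU
        omega
      · by_cases hfin' : ∀ x, (∀ y, (Function.update c (x₀, ys) (some col) (x, y)).isSome) ∨
            b ≤ (pal (Function.update c (x₀, ys) (some col)) x).card
        · exact Or.inl hfin'
        · right
          constructor
          · intro x
            rcases eq_or_ne x x₀ with rfl | hne
            · refine le_trans (Finset.card_le_card pal_update_self) ?_
              refine le_trans (Finset.card_insert_le _ _) ?_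
              omega
            · rw [pal_update_ne hne]
              exact hSmall x
          · intro x x' hlt htouch
            rcases eq_or_ne x' x₀ with rfl | hne
            · have hxnotF : x ∉ Finset.univ.filter
                  (fun x => (∃ y, c (x, y) = none) ∧ (pal c x).card < b) := by
                intro hxF
                have := hx₀min x hxF
                omega
              have hxok : (∀ y, (c (x, y)).isSome) ∨ b ≤ (pal c x).card := by
                by_contra hcon
                push_neg at hcon
                obtain ⟨h1, h2⟩ := hcon
                refine hxnotF (Finset.mem_filter.mpr ⟨Finset.mem_univ _, ?_, by omega⟩)
                obtain ⟨y, hy⟩ := h1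
                exact ⟨y, Option.not_isSome_iff_eq_none.mp hy⟩
              rcases hxok with hd | hp
              · exact Or.inl (fun y => isSome_update _ (hd y))
              · exact Or.inr (le_trans hp (Finset.card_le_card (pal_update_mono hysU x)))
            · have htouch' : ∃ y, (c (x', y)).isSome := by
                obtain ⟨y, hy⟩ := htouch
                refine ⟨y, ?_⟩
                rwa [Function.update_of_ne (by simp [hne])] at hy
              rcases hOrd x x' hlt htouch' with hd | hp
              · exact Or.inl (fun y => isSome_update _ (hd y))
              · exact Or.inr (le_trans hp (Finset.card_le_card (pal_update_mono hysU x)))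

end AuxProof

/-- For any finite graphs `G` and `H`, the lexicographic product `G[H]` is
`k`-indicated colorable for every `k ≥ col(G)·col(H)`. -/
theorem lexProd_indicatedColorable_of_colNum_mul_colNum_le
    {α β : Type*} [Fintype α] [Fintype β] (G : SimpleGraph α) (H : SimpleGraph β)
    (k : ℕ) (hk : coloringNumber G * coloringNumber H ≤ k) :
    IndicatedColorable (lexProd G H) k := by
  obtain ⟨idxA, hA1, hA2⟩ := exists_degen G (colNum_spec G)
  obtain ⟨idxB, hB1, hB2⟩ := exists_degen H (colNum_spec H)
  have hA2' : ∀ v, (Finset.univ.filter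
      (fun u => G.Adj v u ∧ idxA u < idxA v)).card < coloringNumber G := by
    intro v
    have h := hA2 v
    rwa [show {u | G.Adj v u ∧ idxA u < idxA v} =
        ↑(Finset.univ.filter (fun u => G.Adj v u ∧ idxA u < idxA v)) from by ext u; simp,
      Set.ncard_coe_finset] at h
  have hB2' : ∀ y, (Finset.univ.filter
      (fun z => H.Adj y z ∧ idxB z < idxB y)).card < coloringNumber H := by
    intro y
    have h := hB2 y
    rwa [show {z | H.Adj y z ∧ idxB z < idxB y} =
        ↑(Finset.univ.filter (fun z => H.Adj y z ∧ idxB z < idxB y)) from by ext z; simp,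
      Set.ncard_coe_finset] at h
  refine annWins_aux G H hk idxA hA1 hA2' idxB hB1 hB2' (Fintype.card (α × β))
    (fun _ => none) ?_ ?_ ?_ ?_
  · exact le_trans (Finset.card_filter_le _ _) (by rw [Finset.card_univ])
  · intro x y x' y' γ _ h
    exact absurd h (by simp)
  · intro x y y' _ h
    simp at h
  · right
    constructor
    · intro x
      have hemp : pal (fun _ => none : α × β → Option (Fin k)) x = ∅ := by
        ext γ
        simp [mem_pal]
      rw [hemp]
      simp
    · intro x x' _ htouch
      obtain ⟨y, hy⟩ := htouch
      simp at hy
end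

section
/- Let ℓ ≥ 4 and let G be a finite simple graph with no induced subgraph isomorphic to the cycle C_ℓ. Then every complete expansion 𝕂[G] of G (with arbitrary positive clique sizes m_v) has no induced subgraph isomorphic to C_ℓ. -/
open SimpleGraph
open scoped Classical

lemma fin_two_ne_zero (n : ℕ) : ((1 : Fin (n+4)) + 1) ≠ 0 := by
  intro h
  have := congrArg Fin.val h
  simp [Fin.val_add, Fin.val_one, Nat.mod_eq_of_lt] at this

lemma fin_three_ne_zero (n : ℕ) : ((1 : Fin (n+4)) + 1 + 1) ≠ 0 := by
  intro h
  have := congrArg Fin.val h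
  simp [Fin.val_add, Fin.val_one, Nat.mod_eq_of_lt] at this

lemma fin_two_ne_one (n : ℕ) : ((1 : Fin (n+4)) + 1) ≠ 1 := by
  intro h
  have := congrArg Fin.val h
  simp [Fin.val_add, Fin.val_one, Nat.mod_eq_of_lt] at this

open Fin.CommRing in
lemma cycle_aux (n : ℕ) {i j : Fin (n+4)} (h : (cycleGraph (n+4)).Adj i j) :
    ∃ k, (cycleGraph (n+4)).Adj k i ∧ ¬ (cycleGraph (n+4)).Adj k j ∧ k ≠ j := by
  rw [cycleGraph_adj] at h
  rcases h with h | h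
  · -- i - j = 1, take k = i + 1
    refine ⟨i + 1, ?_, ?_, ?_⟩
    · rw [cycleGraph_adj]; left; ring
    · rw [cycleGraph_adj]
      rintro (h' | h')
      · exact fin_two_ne_one n (by linear_combination h' - h)
      · exact fin_three_ne_zero n (by linear_combination -h' - h)
    · intro h'
      exact fin_two_ne_zero n (by linear_combination h' - h)
  · -- j - i = 1, take k = i - 1
    refine ⟨i - 1, ?_, ?_, ?_⟩
    · rw [cycleGraph_adj]; right; ring
    · rw [cycleGraph_adj]
      rintro (h' | h')
      · exact fin_three_ne_zero n (by linear_combination -h' - h)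
      · exact fin_two_ne_one n (by linear_combination h' - h)
    · intro h'
      exact fin_two_ne_zero n (by linear_combination -h' - h)

/-- If `ℓ ≥ 4` and `G` is `C_ℓ`-free, then every complete expansion of `G` is `C_ℓ`-free. -/
theorem completeExpansion_cycleFree {V : Type*} [Fintype V] (ℓ : ℕ) (hℓ : 4 ≤ ℓ)
    (G : SimpleGraph V) (hG : IsFreeOf (cycleGraph ℓ) G)
    (m : V → ℕ) (hm : ∀ v, 0 < m v) :
    IsFreeOf (cycleGraph ℓ) (completeExpansion G m) := by
  obtain ⟨n, rfl⟩ : ∃ n, ℓ = n + 4 := ⟨ℓ - 4, by omega⟩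
  constructor
  intro f
  have hinj : Function.Injective (fun i => (f i).1) := by
    intro i j hij
    simp only at hij
    by_contra hne
    have hfij : f i ≠ f j := fun h => hne (f.injective h)
    have hadj : (cycleGraph (n+4)).Adj i j := by
      rw [← f.map_rel_iff]
      exact Or.inr ⟨hij, hfij⟩
    obtain ⟨k, hki, hkj, hkne⟩ := cycle_aux n hadj
    have hadjki : (completeExpansion G m).Adj (f k) (f i) := f.map_rel_iff.mpr hki
    rcases hadjki with hg | ⟨heq, -⟩
    · exact hkj (f.map_rel_iff.mp (Or.inl (hij ▸ hg)))
    · refine hkj (f.map_rel_iff.mp (Or.inr ⟨heq.trans hij, ?_⟩))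
      exact fun h => hkne (f.injective h)
  refine hG.elim' ⟨⟨fun i => (f i).1, hinj⟩, ?_⟩
  intro a b
  simp only [Function.Embedding.coeFn_mk]
  constructor
  · intro hg
    exact f.map_rel_iff.mp (Or.inl hg)
  · intro hab
    rcases f.map_rel_iff.mpr hab with hg | ⟨heq, -⟩
    · exact hg
    · exact absurd (hinj heq) ((cycleGraph (n+4)).ne_of_adj hab)
end
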